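/- For 0 < c_e < c_* and 0 < m < R₀·ϑ·c_e·ρ(c_e²), the function φ ↦ A⁻¹(A(c_e) − ϑ(ζ̂ − φ)/m), with ζ̂ = m(A(c_e) − A(c_m))/ϑ and c_m the root of R₀ϑ c_m ρ(c_m²) = m, is the unique solution of the ODE problem: (d²/dφ²)A(q̂(φ)) = 0 on (0, ζ̂), (d/dφ)A(q̂)(0) = 1/(R₀ q̂(0) ρ(q̂²(0))), q̂(ζ̂) = c_e, together with the mass-flux condition m/(q̂(0)ρ(q̂²(0))) = R₀ϑ, where ζ̂ > 0 is also an unknown. -/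

import Mathlib

open Set

/-- Bernoulli density as a function of `t = q²`. -/
noncomputable def rho (γ t : ℝ) : ℝ := (1 - (γ - 1) / 2 * t) ^ ((1 : ℝ) / (γ - 1))

/-- Critical (sonic) speed. -/
noncomputable def cstar (γ : ℝ) : ℝ := Real.sqrt (2 / (γ + 1))

/-- `A(q) = ∫_{c_*}^q (ρ(s²) + 2s²ρ'(s²))/(s ρ²(s²)) ds`. -/
noncomputable def Afun (γ q : ℝ) : ℝ :=
  ∫ s in (cstar γ)..q,
    (rho γ (s ^ 2) + 2 * s ^ 2 * deriv (rho γ) (s ^ 2)) / (s * (rho γ (s ^ 2)) ^ 2)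

/-- `A⁻¹` : the inverse of `A` restricted to `(0, c_*)`. -/
noncomputable def Ainv (γ : ℝ) : ℝ → ℝ := Function.invFunOn (Afun γ) (Ioo 0 (cstar γ))

/-- Solutions of the symmetric ODE free boundary problem
`(A(q̂))'' = 0` on `(0,ζ)`, `(A(q̂))'(0) = 1/(R₀ q̂(0) ρ(q̂²(0)))`, `q̂(ζ) = c_e`,
with the mass-flux condition `m/(q̂(0)ρ(q̂²(0))) = R₀ϑ`. -/
def IsSymSol (γ R₀ ϑ c_e m : ℝ) (ζ : ℝ) (q : ℝ → ℝ) : Prop :=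
  0 < ζ ∧
  (∀ φ ∈ Icc (0 : ℝ) ζ, q φ ∈ Ioo (0 : ℝ) (cstar γ)) ∧
  (∀ φ ∈ Icc (0 : ℝ) ζ, DifferentiableAt ℝ (fun x => Afun γ (q x)) φ ∧
    DifferentiableAt ℝ (deriv (fun x => Afun γ (q x))) φ) ∧
  (∀ φ ∈ Ioo (0 : ℝ) ζ, deriv (deriv (fun x => Afun γ (q x))) φ = 0) ∧
  deriv (fun x => Afun γ (q x)) 0 = 1 / (R₀ * q 0 * rho γ ((q 0) ^ 2)) ∧
  q ζ = c_e ∧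
  m / (q 0 * rho γ ((q 0) ^ 2)) = R₀ * ϑ

namespace Aux
variable {γ : ℝ} (hγ : 1 < γ)

noncomputable def sone (γ : ℝ) : ℝ := Real.sqrt (2 / (γ - 1))

lemma base_pos (hγ : 1 < γ) {t : ℝ} (ht : t < 2 / (γ - 1)) : 0 < 1 - (γ - 1) / 2 * t := by
  have h1 : 0 < γ - 1 := by linarith
  have := (lt_div_iff₀ h1).mp ht
  nlinarith

lemma rho_pos (hγ : 1 < γ) {t : ℝ} (ht : t < 2 / (γ - 1)) : 0 < rho γ t :=
  Real.rpow_pos_of_pos (base_pos hγ ht) _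

lemma cstar_pos (hγ : 1 < γ) : 0 < cstar γ :=
  Real.sqrt_pos.mpr (by positivity)

lemma cstar_sq (hγ : 1 < γ) : cstar γ ^ 2 = 2 / (γ + 1) :=
  Real.sq_sqrt (by positivity)

lemma frac_lt (hγ : 1 < γ) : 2 / (γ + 1) < 2 / (γ - 1) := by
  apply div_lt_div_of_pos_left (by norm_num) (by linarith) (by linarith)

lemma cstar_lt_sone (hγ : 1 < γ) : cstar γ < sone γ := by
  exact Real.sqrt_lt_sqrt (le_of_lt (div_pos (show (0:ℝ) < 2 by norm_num) (show (0:ℝ) < γ + 1 by linarith))) (frac_lt hγ)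

lemma sone_pos (hγ : 1 < γ) : 0 < sone γ := lt_trans (cstar_pos hγ) (cstar_lt_sone hγ)

lemma sq_lt_of_mem (hγ : 1 < γ) {s : ℝ} (h0 : 0 < s) (h1 : s < sone γ) : s ^ 2 < 2 / (γ - 1) := by
  have := Real.sq_sqrt (le_of_lt (div_pos (show (0:ℝ) < 2 by norm_num) (show (0:ℝ) < γ - 1 by linarith)))
  calc s ^ 2 < sone γ ^ 2 := by nlinarith [sone_pos hγ]
    _ = 2 / (γ - 1) := this

lemma hasDerivAt_rho (hγ : 1 < γ) {t : ℝ} (ht : t < 2 / (γ - 1)) :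
    HasDerivAt (rho γ) (-(1/2) * (1 - (γ - 1) / 2 * t) ^ ((1:ℝ) / (γ - 1) - 1)) t := by
  have hb := base_pos hγ ht
  have h1 : HasDerivAt (fun t : ℝ => 1 - (γ - 1) / 2 * t) (-((γ - 1) / 2)) t := by
    simpa using ((hasDerivAt_id t).const_mul ((γ - 1)/2)).const_sub 1
  have h2 := h1.rpow_const (p := (1:ℝ)/(γ-1)) (Or.inl (ne_of_gt hb))
  have hne : γ - 1 ≠ 0 := by linarith
  have h3 : -((γ - 1) / 2) * ((1:ℝ) / (γ - 1)) = -(1/2) := by field_simp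
  convert h2 using 1
  · rfl
  rw [h3.symm]

lemma deriv_rho (hγ : 1 < γ) {t : ℝ} (ht : t < 2 / (γ - 1)) :
    deriv (rho γ) t = -(1/2) * (1 - (γ - 1) / 2 * t) ^ ((1:ℝ) / (γ - 1) - 1) :=
  (hasDerivAt_rho hγ ht).deriv

/-- numerator `N s = ρ(s²) + 2s²ρ'(s²)` -/
lemma numer_eq (hγ : 1 < γ) {s : ℝ} (h0 : 0 < s) (h1 : s < sone γ) :
    rho γ (s ^ 2) + 2 * s ^ 2 * deriv (rho γ) (s ^ 2)
      = (1 - (γ + 1) / 2 * s ^ 2) * (1 - (γ - 1) / 2 * s ^ 2) ^ ((1:ℝ) / (γ - 1) - 1) := by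
  have ht := sq_lt_of_mem hγ h0 h1
  have hb := base_pos hγ ht
  rw [deriv_rho hγ ht, rho]
  have : (1 - (γ - 1) / 2 * s ^ 2) ^ ((1:ℝ) / (γ - 1))
      = (1 - (γ - 1) / 2 * s ^ 2) ^ ((1:ℝ) / (γ - 1) - 1) * (1 - (γ - 1) / 2 * s ^ 2) := by
    rw [← Real.rpow_add_one (ne_of_gt hb)]; ring_nf
  rw [this]; ring

lemma numer_pos (hγ : 1 < γ) {s : ℝ} (hs : s ∈ Ioo 0 (cstar γ)) :
    0 < rho γ (s ^ 2) + 2 * s ^ 2 * deriv (rho γ) (s ^ 2) := by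
  obtain ⟨h0, h1⟩ := hs
  rw [numer_eq hγ h0 (h1.trans (cstar_lt_sone hγ))]
  have hsq : s ^ 2 < 2 / (γ + 1) := by
    rw [← cstar_sq hγ]; nlinarith [cstar_pos hγ]
  have : 0 < 1 - (γ + 1) / 2 * s ^ 2 := by
    have := (lt_div_iff₀ (by linarith : (0:ℝ) < γ + 1)).mp hsq; nlinarith
  have hb := base_pos hγ (sq_lt_of_mem hγ h0 (h1.trans (cstar_lt_sone hγ)))
  positivity


noncomputable def F (γ s : ℝ) : ℝ :=
  (rho γ (s ^ 2) + 2 * s ^ 2 * deriv (rho γ) (s ^ 2)) / (s * (rho γ (s ^ 2)) ^ 2)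

lemma Afun_eq (γ q : ℝ) : Afun γ q = ∫ s in (cstar γ)..q, F γ s := rfl

lemma F_pos (hγ : 1 < γ) {s : ℝ} (hs : s ∈ Ioo 0 (cstar γ)) : 0 < F γ s := by
  apply div_pos (numer_pos hγ hs)
  have ht := sq_lt_of_mem hγ hs.1 (hs.2.trans (cstar_lt_sone hγ))
  have := rho_pos hγ ht
  have := hs.1
  positivity

lemma F_contOn (hγ : 1 < γ) : ContinuousOn (F γ) (Ioo 0 (sone γ)) := by
  have key : ∀ s ∈ Ioo 0 (sone γ), F γ s =
      ((1 - (γ - 1) / 2 * s ^ 2) ^ ((1:ℝ) / (γ - 1))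
        + 2 * s ^ 2 * (-(1/2) * (1 - (γ - 1) / 2 * s ^ 2) ^ ((1:ℝ) / (γ - 1) - 1)))
      / (s * ((1 - (γ - 1) / 2 * s ^ 2) ^ ((1:ℝ) / (γ - 1))) ^ 2) := by
    intro s hs
    rw [F, deriv_rho hγ (sq_lt_of_mem hγ hs.1 hs.2), rho]
  apply ContinuousOn.congr _ key
  have hbase : ∀ s ∈ Ioo 0 (sone γ), (1 - (γ - 1) / 2 * s ^ 2) ≠ 0 := fun s hs =>
    ne_of_gt (base_pos hγ (sq_lt_of_mem hγ hs.1 hs.2))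
  have hc : ContinuousOn (fun s : ℝ => 1 - (γ - 1) / 2 * s ^ 2) (Ioo 0 (sone γ)) := by
    fun_prop
  have h1 : ContinuousOn (fun s : ℝ => (1 - (γ - 1) / 2 * s ^ 2) ^ ((1:ℝ) / (γ - 1)))
      (Ioo 0 (sone γ)) := hc.rpow_const (fun s hs => Or.inl (hbase s hs))
  have h2 : ContinuousOn (fun s : ℝ => (1 - (γ - 1) / 2 * s ^ 2) ^ ((1:ℝ) / (γ - 1) - 1))
      (Ioo 0 (sone γ)) := hc.rpow_const (fun s hs => Or.inl (hbase s hs))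
  apply ContinuousOn.div
  · exact h1.add (((continuousOn_const.mul (continuousOn_pow 2)).mul
      (continuousOn_const.mul h2)))
  · exact (continuousOn_id.mul (h1.pow 2))
  · intro s hs
    have hb := base_pos hγ (sq_lt_of_mem hγ hs.1 hs.2)
    have h0 := hs.1
    have : (0:ℝ) < (1 - (γ - 1) / 2 * s ^ 2) ^ ((1:ℝ) / (γ - 1)) := Real.rpow_pos_of_pos hb _
    positivity

lemma F_intble (hγ : 1 < γ) {a b : ℝ} (ha : a ∈ Ioo 0 (sone γ)) (hb : b ∈ Ioo 0 (sone γ)) :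
    IntervalIntegrable (F γ) MeasureTheory.volume a b := by
  apply ContinuousOn.intervalIntegrable
  apply (F_contOn hγ).mono
  exact Set.OrdConnected.uIcc_subset ordConnected_Ioo ha hb
lemma cstar_mem (hγ : 1 < γ) : cstar γ ∈ Ioo 0 (sone γ) :=
  ⟨cstar_pos hγ, cstar_lt_sone hγ⟩

lemma Ioo_sub (hγ : 1 < γ) : Ioo (0:ℝ) (cstar γ) ⊆ Ioo 0 (sone γ) :=
  Ioo_subset_Ioo le_rfl (le_of_lt (cstar_lt_sone hγ))

lemma Afun_sub (hγ : 1 < γ) {a b : ℝ} (ha : a ∈ Ioo 0 (sone γ)) (hb : b ∈ Ioo 0 (sone γ)) :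
    Afun γ b - Afun γ a = ∫ s in a..b, F γ s := by
  rw [Afun_eq, Afun_eq]
  exact intervalIntegral.integral_interval_sub_left
    (F_intble hγ (cstar_mem hγ) hb) (F_intble hγ (cstar_mem hγ) ha)

lemma Afun_strictMonoOn (hγ : 1 < γ) : StrictMonoOn (Afun γ) (Ioo 0 (cstar γ)) := by
  intro a ha b hb hab
  have h := intervalIntegral.intervalIntegral_pos_of_pos_on
    (F_intble hγ (Ioo_sub hγ ha) (Ioo_sub hγ hb))
    (fun x hx => F_pos hγ ⟨lt_trans ha.1 hx.1, lt_trans hx.2 hb.2⟩) hab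
  have := Afun_sub hγ (Ioo_sub hγ ha) (Ioo_sub hγ hb)
  linarith

lemma Ainv_Afun (hγ : 1 < γ) {x : ℝ} (hx : x ∈ Ioo 0 (cstar γ)) :
    Ainv γ (Afun γ x) = x :=
  ((Afun_strictMonoOn hγ).injOn.leftInvOn_invFunOn) hx

lemma Afun_contOn (hγ : 1 < γ) {a b : ℝ} (ha : a ∈ Ioo 0 (sone γ)) (hb : b ∈ Ioo 0 (sone γ))
    (hab : a ≤ b) : ContinuousOn (Afun γ) (Icc a b) := by
  have key : ∀ q ∈ Icc a b, Afun γ q = Afun γ a + ∫ s in a..q, F γ s := by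
    intro q hq
    have hq' : q ∈ Ioo 0 (sone γ) := ⟨lt_of_lt_of_le ha.1 hq.1, lt_of_le_of_lt hq.2 hb.2⟩
    have := Afun_sub hγ ha hq'
    linarith
  apply ContinuousOn.congr _ key
  apply ContinuousOn.add continuousOn_const
  have h1 : MeasureTheory.IntegrableOn (F γ) (uIcc a b) MeasureTheory.volume := by
    rw [uIcc_of_le hab]
    exact ((F_contOn hγ).mono (Icc_subset_Ioo ha.1 hb.2)).integrableOn_compact isCompact_Icc
  have := intervalIntegral.continuousOn_primitive_interval (a := a) (b := b)
    (f := F γ) (μ := MeasureTheory.volume) h1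
  rwa [uIcc_of_le hab] at this

/-- Ainv characterization via IVT -/
lemma Ainv_spec (hγ : 1 < γ) {a b v : ℝ} (ha : a ∈ Ioo 0 (cstar γ)) (hb : b ∈ Ioo 0 (cstar γ))
    (hab : a ≤ b) (hv : v ∈ Icc (Afun γ a) (Afun γ b)) :
    Ainv γ v ∈ Icc a b ∧ Afun γ (Ainv γ v) = v := by
  obtain ⟨x, hx, hxv⟩ := intermediate_value_Icc hab
    (Afun_contOn hγ (Ioo_sub hγ ha) (Ioo_sub hγ hb) hab) hv
  have hx' : x ∈ Ioo 0 (cstar γ) := ⟨lt_of_lt_of_le ha.1 hx.1, lt_of_le_of_lt hx.2 hb.2⟩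
  rw [← hxv, Ainv_Afun hγ hx']
  exact ⟨hx, rfl⟩

/-- strict monotonicity of `s ↦ s·ρ(s²)` on `[0, c_*]` -/
lemma mass_strictMonoOn (hγ : 1 < γ) :
    StrictMonoOn (fun s => s * rho γ (s ^ 2)) (Icc 0 (cstar γ)) := by
  apply strictMonoOn_of_deriv_pos (convex_Icc _ _)
  · have hc : ContinuousOn (fun s : ℝ => 1 - (γ - 1) / 2 * s ^ 2) (Icc 0 (cstar γ)) := by
      fun_prop
    have hbase : ∀ s ∈ Icc (0:ℝ) (cstar γ), (1 - (γ - 1) / 2 * s ^ 2) ≠ 0 := by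
      intro s hs
      have h1 : s ^ 2 ≤ cstar γ ^ 2 := by nlinarith [hs.1, hs.2]
      have h2 : s ^ 2 < 2 / (γ - 1) := lt_of_le_of_lt (h1.trans_eq (cstar_sq hγ)) (frac_lt hγ)
      exact ne_of_gt (base_pos hγ h2)
    have : ContinuousOn (fun s : ℝ => s * (1 - (γ - 1) / 2 * s ^ 2) ^ ((1:ℝ)/(γ-1)))
        (Icc 0 (cstar γ)) :=
      continuousOn_id.mul (hc.rpow_const (fun s hs => Or.inl (hbase s hs)))
    exact this.congr (fun s _ => by rw [rho])
  · intro s hs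
    rw [interior_Icc] at hs
    have hsone : s < sone γ := hs.2.trans (cstar_lt_sone hγ)
    have ht := sq_lt_of_mem hγ hs.1 hsone
    have hd : HasDerivAt (fun s : ℝ => s * rho γ (s ^ 2))
        (rho γ (s ^ 2) + 2 * s ^ 2 * deriv (rho γ) (s ^ 2)) s := by
      have hp : HasDerivAt (fun x : ℝ => x ^ 2) (2 * s) s := by
        simpa using hasDerivAt_pow 2 s
      have h1 : HasDerivAt (fun x : ℝ => rho γ (x ^ 2))
          (deriv (rho γ) (s ^ 2) * (2 * s)) s := by
        have := HasDerivAt.comp (h := fun x : ℝ => x ^ 2) s (hasDerivAt_rho hγ ht) hp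
        rw [deriv_rho hγ ht]
        exact this
      have := (hasDerivAt_id s).mul h1
      exact this.congr_deriv (by simp only [id_eq]; ring)
    rw [hd.deriv]
    exact numer_pos hγ hs

end Aux

open Aux Filter Topology

/-- For `0 < c_e < c_*` and `0 < m < R₀ϑ c_e ρ(c_e²)`, the function
`φ ↦ A⁻¹(A(c_e) − ϑ(ζ̂ − φ)/m)` with `ζ̂ = m(A(c_e) − A(c_m))/ϑ` is the unique
solution of the symmetric ODE problem, `ζ̂` being the (unique) free boundary. -/
theorem stmt_8 (γ R₀ ϑ c_e m c_m : ℝ) (hγ : 1 < γ) (hR₀ : 0 < R₀)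
    (hϑ : ϑ ∈ Ioo (0 : ℝ) (Real.pi / 2))
    (hce : c_e ∈ Ioo (0 : ℝ) (cstar γ))
    (hm : 0 < m) (hm' : m < R₀ * ϑ * c_e * rho γ (c_e ^ 2))
    (hcm : c_m ∈ Ioo (0 : ℝ) c_e ∧ R₀ * ϑ * c_m * rho γ (c_m ^ 2) = m) :
    IsSymSol γ R₀ ϑ c_e m (m * (Afun γ c_e - Afun γ c_m) / ϑ)
      (fun φ => Ainv γ (Afun γ c_e - ϑ * (m * (Afun γ c_e - Afun γ c_m) / ϑ - φ) / m)) ∧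
    (∀ ζ : ℝ, ∀ q : ℝ → ℝ, IsSymSol γ R₀ ϑ c_e m ζ q →
      ζ = m * (Afun γ c_e - Afun γ c_m) / ϑ ∧
      ∀ φ ∈ Icc (0 : ℝ) ζ,
        q φ = Ainv γ (Afun γ c_e - ϑ * (m * (Afun γ c_e - Afun γ c_m) / ϑ - φ) / m)) := by

  obtain ⟨hϑ0, -⟩ := hϑ
  obtain ⟨hce0, hcec⟩ := hce
  obtain ⟨⟨hcm0, hcmce⟩, hmass⟩ := hcm
  have hϑne : ϑ ≠ 0 := ne_of_gt hϑ0
  have hmne : m ≠ 0 := ne_of_gt hm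
  have hR₀ne : R₀ ≠ 0 := ne_of_gt hR₀
  have hcmm : c_m ∈ Ioo (0:ℝ) (cstar γ) := ⟨hcm0, hcmce.trans hcec⟩
  have hcem : c_e ∈ Ioo (0:ℝ) (cstar γ) := ⟨hce0, hcec⟩
  have hAlt : Afun γ c_m < Afun γ c_e := Afun_strictMonoOn hγ hcmm hcem hcmce
  have hrhocm : 0 < rho γ (c_m ^ 2) :=
    rho_pos hγ (sq_lt_of_mem hγ hcm0 (hcmm.2.trans (cstar_lt_sone hγ)))
  set ζh := m * (Afun γ c_e - Afun γ c_m) / ϑ with hζh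
  have hζhpos : 0 < ζh := by
    have hd : 0 < Afun γ c_e - Afun γ c_m := by linarith
    rw [hζh]; positivity
  have hζhval : ϑ / m * ζh = Afun γ c_e - Afun γ c_m := by
    rw [hζh]; field_simp
  -- the affine function L
  set L : ℝ → ℝ := fun x => Afun γ c_m + ϑ / m * x with hLdef
  have hEL : ∀ x : ℝ, Afun γ c_e - ϑ * (ζh - x) / m = L x := by
    intro x
    rw [hLdef]
    have : ϑ * (ζh - x) / m = ϑ/m*ζh - ϑ/m*x := by ring
    rw [this, hζhval]; ring
  set Q : ℝ → ℝ := fun φ => Ainv γ (Afun γ c_e - ϑ * (ζh - φ) / m) with hQdef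
  have hQ' : ∀ x, Q x = Ainv γ (L x) := by
    intro x; rw [hQdef]; simp only; rw [hEL]
  -- endpoints of a bracket
  set a₀ := c_m / 2 with ha₀def
  set b₀ := (c_e + cstar γ) / 2 with hb₀def
  have ha₀m : a₀ ∈ Ioo (0:ℝ) (cstar γ) := ⟨by positivity, by rw [ha₀def]; linarith [hcmm.2]⟩
  have hb₀m : b₀ ∈ Ioo (0:ℝ) (cstar γ) := ⟨by rw [hb₀def]; linarith [cstar_pos hγ], by rw [hb₀def]; linarith⟩
  have ha₀b₀ : a₀ ≤ b₀ := by rw [ha₀def, hb₀def]; linarith [hcmm.2]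
  have hAa₀ : Afun γ a₀ < Afun γ c_m :=
    Afun_strictMonoOn hγ ha₀m hcmm (by rw [ha₀def]; linarith)
  have hAb₀ : Afun γ c_e < Afun γ b₀ :=
    Afun_strictMonoOn hγ hcem hb₀m (by rw [hb₀def]; linarith)
  -- the open set U
  set U : Set ℝ := L ⁻¹' (Ioo (Afun γ a₀) (Afun γ b₀)) with hUdef
  have hLcont : Continuous L := by rw [hLdef]; fun_prop
  have hUopen : IsOpen U := isOpen_Ioo.preimage hLcont
  have hQU : ∀ x ∈ U, Afun γ (Q x) = L x ∧ Q x ∈ Icc a₀ b₀ := by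
    intro x hx
    have hx' : L x ∈ Icc (Afun γ a₀) (Afun γ b₀) := ⟨le_of_lt hx.1, le_of_lt hx.2⟩
    obtain ⟨h1, h2⟩ := Ainv_spec hγ ha₀m hb₀m ha₀b₀ hx'
    rw [hQ' x]
    exact ⟨h2, h1⟩
  have hIccU : Icc (0:ℝ) ζh ⊆ U := by
    intro φ hφ
    have h1 : Afun γ c_m ≤ L φ := by
      rw [hLdef]; simp only
      nlinarith [hφ.1, div_pos hϑ0 hm]
    have h2 : L φ ≤ Afun γ c_e := by
      have : L φ = Afun γ c_m + ϑ/m*φ := rfl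
      have h3 : ϑ/m*φ ≤ ϑ/m*ζh := by
        apply mul_le_mul_of_nonneg_left hφ.2 (le_of_lt (div_pos hϑ0 hm))
      rw [this]; rw [hζhval] at h3; linarith
    exact ⟨lt_of_lt_of_le hAa₀ h1, lt_of_le_of_lt h2 hAb₀⟩
  have hLd : ∀ x : ℝ, HasDerivAt L (ϑ/m) x := by
    intro x
    rw [hLdef]
    simpa using ((hasDerivAt_id x).const_mul (ϑ/m)).const_add (Afun γ c_m)
  -- eventual equality and derivatives
  have hev : ∀ x ∈ U, (fun y => Afun γ (Q y)) =ᶠ[nhds x] L := by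
    intro x hx
    exact eventuallyEq_of_mem (hUopen.mem_nhds hx) (fun y hy => (hQU y hy).1)
  have hderivU : ∀ x ∈ U, deriv (fun y => Afun γ (Q y)) x = ϑ/m := by
    intro x hx
    rw [(hev x hx).deriv_eq, (hLd x).deriv]
  have hdiffU : ∀ x ∈ U, DifferentiableAt ℝ (fun y => Afun γ (Q y)) x := by
    intro x hx
    exact ((hev x hx).differentiableAt_iff).mpr (hLd x).differentiableAt
  have hev2 : ∀ x ∈ U, deriv (fun y => Afun γ (Q y)) =ᶠ[nhds x] (fun _ => ϑ/m) := by
    intro x hx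
    exact eventuallyEq_of_mem (hUopen.mem_nhds hx) hderivU
  -- values at the endpoints
  have hQ0 : Q 0 = c_m := by
    rw [hQ' 0]
    have : L 0 = Afun γ c_m := by rw [hLdef]; simp
    rw [this, Ainv_Afun hγ hcmm]
  have hQζ : Q ζh = c_e := by
    rw [hQ' ζh]
    have : L ζh = Afun γ c_e := by
      rw [hLdef]; simp only; rw [hζhval]; ring
    rw [this, Ainv_Afun hγ hcem]
  have h0U : (0:ℝ) ∈ U := hIccU ⟨le_rfl, le_of_lt hζhpos⟩
  constructor
  · refine ⟨hζhpos, ?_, ?_, ?_, ?_, hQζ, ?_⟩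
    · intro φ hφ
      have := (hQU φ (hIccU hφ)).2
      exact ⟨lt_of_lt_of_le ha₀m.1 this.1, lt_of_le_of_lt this.2 hb₀m.2⟩
    · intro φ hφ
      have hφU := hIccU hφ
      refine ⟨hdiffU φ hφU, ?_⟩
      exact ((hev2 φ hφU).differentiableAt_iff).mpr (differentiableAt_const _)
    · intro φ hφ
      have hφU := hIccU ⟨le_of_lt hφ.1, le_of_lt hφ.2⟩
      rw [(hev2 φ hφU).deriv_eq]
      simp
    · rw [hderivU 0 h0U, hQ0, ← hmass]
      field_simp
    · rw [hQ0, ← hmass]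
      field_simp
  · rintro ζ q ⟨hζpos, hq, hdiff, hdd, hd0, hqζ, hflux⟩
    set f : ℝ → ℝ := fun x => Afun γ (q x) with hfdef
    set g : ℝ → ℝ := deriv f with hgdef
    have hq0 : q 0 ∈ Ioo (0:ℝ) (cstar γ) := hq 0 ⟨le_rfl, le_of_lt hζpos⟩
    have hrhoq0 : 0 < rho γ ((q 0) ^ 2) :=
      rho_pos hγ (sq_lt_of_mem hγ hq0.1 (hq0.2.trans (cstar_lt_sone hγ)))
    -- q 0 = c_m
    have hposq : (0:ℝ) < q 0 * rho γ ((q 0) ^ 2) := mul_pos hq0.1 hrhoq0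
    have hmflux : q 0 * rho γ ((q 0) ^ 2) = m / (R₀ * ϑ) := by
      have h1 := (div_eq_iff (ne_of_gt hposq)).mp hflux
      rw [eq_div_iff (by positivity : R₀ * ϑ ≠ 0), h1]
      ring
    have hq0cm : q 0 = c_m := by
      have h1 : q 0 * rho γ ((q 0)^2) = c_m * rho γ (c_m^2) := by
        rw [hmflux, ← hmass]; field_simp
      exact (mass_strictMonoOn hγ).injOn
        ⟨le_of_lt hq0.1, le_of_lt hq0.2⟩ ⟨le_of_lt hcm0, le_of_lt hcmm.2⟩ h1
    -- deriv f 0 = ϑ/m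
    have hd0' : g 0 = ϑ / m := by
      rw [hd0, hq0cm, ← hmass]
      field_simp
    -- g is constant on Ioo 0 ζ
    have gIoo : ∀ x ∈ Ioo (0:ℝ) ζ, ∀ y ∈ Ioo (0:ℝ) ζ, x ≤ y → g y = g x := by
      intro x hx y hy hxy
      have cont : ContinuousOn g (Icc x y) := by
        intro z hz
        have hz' : z ∈ Icc (0:ℝ) ζ := ⟨le_of_lt (lt_of_lt_of_le hx.1 hz.1), hz.2.trans (le_of_lt hy.2)⟩
        exact ((hdiff z hz').2.continuousAt).continuousWithinAt
      have der : ∀ z ∈ Ico x y, HasDerivWithinAt g 0 (Ici z) z := by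
        intro z hz
        have hz' : z ∈ Ioo (0:ℝ) ζ := ⟨lt_of_lt_of_le hx.1 hz.1, lt_of_lt_of_le hz.2 (le_of_lt hy.2)⟩
        have h1 := (hdiff z ⟨le_of_lt hz'.1, le_of_lt hz'.2⟩).2.hasDerivAt
        rw [hdd z hz'] at h1
        exact h1.hasDerivWithinAt
      exact constant_of_has_deriv_right_zero cont der y ⟨hxy, le_rfl⟩
    have gconst : ∀ x ∈ Ioo (0:ℝ) ζ, g x = g (ζ/2) := by
      intro x hx
      have hhalf : ζ/2 ∈ Ioo (0:ℝ) ζ := ⟨by linarith, by linarith [hζpos]⟩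
      rcases le_total x (ζ/2) with h | h
      · exact (gIoo x hx (ζ/2) hhalf h).symm
      · exact gIoo (ζ/2) hhalf x hx h
    have g0 : g 0 = g (ζ/2) := by
      have hc : ContinuousAt g 0 := (hdiff 0 ⟨le_rfl, le_of_lt hζpos⟩).2.continuousAt
      have h1 : Tendsto g (nhdsWithin (0:ℝ) (Ioi 0)) (nhds (g 0)) :=
        (hc.continuousWithinAt).tendsto
      have hevg : g =ᶠ[nhdsWithin (0:ℝ) (Ioi 0)] (fun _ => g (ζ/2)) := by
        filter_upwards [Ioo_mem_nhdsGT_of_mem (⟨le_rfl, hζpos⟩ : (0:ℝ) ∈ Ico 0 ζ)] with x hx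
        exact gconst x hx
      have h2 : Tendsto g (nhdsWithin (0:ℝ) (Ioi 0)) (nhds (g (ζ/2))) :=
        Filter.Tendsto.congr' hevg.symm tendsto_const_nhds
      exact tendsto_nhds_unique h1 h2
    have gval : ∀ x ∈ Ico (0:ℝ) ζ, g x = ϑ/m := by
      intro x hx
      rcases eq_or_lt_of_le hx.1 with h | h
      · rw [← h]; exact hd0'
      · rw [gconst x ⟨h, hx.2⟩, ← g0]; exact hd0'
    -- f is affine on [0, ζ]
    have haff : ∀ x ∈ Icc (0:ℝ) ζ, f x = f 0 + ϑ/m * x := by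
      have cont : ContinuousOn (fun x => f x - ϑ/m * x) (Icc 0 ζ) := by
        apply ContinuousOn.sub
        · intro z hz
          exact ((hdiff z hz).1.continuousAt).continuousWithinAt
        · fun_prop
      have der : ∀ x ∈ Ico (0:ℝ) ζ, HasDerivWithinAt (fun x => f x - ϑ/m * x) 0 (Ici x) x := by
        intro x hx
        have hfd : HasDerivAt f (ϑ/m) x := by
          have h1 := (hdiff x ⟨hx.1, le_of_lt hx.2⟩).1.hasDerivAt
          rwa [show deriv f x = ϑ/m from gval x hx] at h1
        have h2 : HasDerivAt (fun y => f y - ϑ/m * y) 0 x := by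
          have h3 := hfd.sub ((hasDerivAt_id x).const_mul (ϑ/m))
          simp only [id_eq, mul_one, sub_self] at h3
          exact h3
        exact h2.hasDerivWithinAt
      intro x hx
      have := constant_of_has_deriv_right_zero cont der x hx
      simp only [mul_zero, sub_zero] at this
      linarith [this]
    -- determine ζ
    have hf0 : f 0 = Afun γ c_m := by rw [hfdef]; simp only; rw [hq0cm]
    have hfζ : f ζ = Afun γ c_e := by rw [hfdef]; simp only; rw [hqζ]
    have hζeq : ζ = ζh := by
      have h1 := haff ζ ⟨le_of_lt hζpos, le_rfl⟩
      rw [hf0, hfζ] at h1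
      have h2 : ϑ * ζ = m * (Afun γ c_e - Afun γ c_m) := by
        have h3 : ϑ/m*ζ = Afun γ c_e - Afun γ c_m := by linarith
        calc ϑ*ζ = m * (ϑ/m*ζ) := by field_simp
        _ = m * (Afun γ c_e - Afun γ c_m) := by rw [h3]
      rw [hζh, eq_div_iff hϑne, mul_comm ζ ϑ]
      exact h2
    refine ⟨hζeq, ?_⟩
    intro φ hφ
    rw [hEL φ]
    have hqφ : q φ ∈ Ioo (0:ℝ) (cstar γ) := hq φ hφ
    have h1 : Afun γ (q φ) = L φ := by
      have := haff φ hφ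
      rw [hf0] at this
      rw [hLdef]
      exact this
    rw [← h1, Ainv_Afun hγ hqφ]
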